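/- Let H : ℝ^{n1} × ℝ^{n2} → ℝ be differentiable and suppose ∇H is M-Lipschitz continuous on a set B ⊆ ℝ^{n1} × ℝ^{n2}. Let x^{k} = (x1^{k}, x2^{k}), x^{k−1}, x^{k−2} be iterates with x^k, x^{k−1} ∈ B, let α1^{k−1}, β1^{k−1} ∈ [0,1], let z1^{k−1} = x1^{k−1} + β1^{k−1}(x1^{k−1} − x1^{k−2}) with (z1^{k−1}, x2^{k−1}) ∈ B, and let 0 < τ1^{k−1} ≤ τ1⁺. Define v1^k := ∇_{x1}H(x1^k, x2^k) − ∇_{x1}H(z1^{k−1}, x2^{k−1}) + τ1^{k−1}(x1^{k−1} − x1^k + α1^{k−1}(x1^{k−1} − x1^{k−2})). Then ‖v1^k‖ ≤ (τ1⁺ + M)(‖x^k − x^{k−1}‖ + ‖x^{k−1} − x^{k−2}‖). -/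

import Mathlib

lemma aux_sqrt_shift (a b c : ℝ) (ha : 0 ≤ a) (hc : 0 ≤ c) :
    Real.sqrt ((a + c) ^ 2 + b ^ 2) ≤ Real.sqrt (a ^ 2 + b ^ 2) + c := by
  have hs0 : 0 ≤ Real.sqrt (a ^ 2 + b ^ 2) := Real.sqrt_nonneg _
  have hsa : a ≤ Real.sqrt (a ^ 2 + b ^ 2) := by
    rw [show a ^ 2 + b ^ 2 = a ^ 2 + b ^ 2 from rfl]
    nlinarith [Real.sq_sqrt (by positivity : (0:ℝ) ≤ a ^ 2 + b ^ 2), hs0]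
  have h2 : (a + c) ^ 2 + b ^ 2 ≤ (Real.sqrt (a ^ 2 + b ^ 2) + c) ^ 2 := by
    nlinarith [Real.sq_sqrt (by positivity : (0:ℝ) ≤ a ^ 2 + b ^ 2)]
  calc Real.sqrt ((a + c) ^ 2 + b ^ 2) ≤ Real.sqrt ((Real.sqrt (a ^ 2 + b ^ 2) + c) ^ 2) :=
        Real.sqrt_le_sqrt h2
    _ = Real.sqrt (a ^ 2 + b ^ 2) + c := Real.sqrt_sq (by positivity)

lemma aux_le_sqrt (a b : ℝ) (ha : 0 ≤ a) : a ≤ Real.sqrt (a ^ 2 + b ^ 2) := by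
  nlinarith [Real.sq_sqrt (by positivity : (0:ℝ) ≤ a ^ 2 + b ^ 2), Real.sqrt_nonneg (a ^ 2 + b ^ 2)]

/-- bound on the first block of the subgradient, from Proposition 4.8.
`H : ℝ^{n1} × ℝ^{n2} → ℝ` is differentiable (in each block, so that
`∇H(x1,x2) = (∇_{x1}H(x1,x2), ∇_{x2}H(x1,x2))`) and `∇H` is `M`-Lipschitz on
`B ⊆ ℝ^{n1} × ℝ^{n2}` for the Euclidean norm on pairs `‖(a,b)‖ = √(‖a‖² + ‖b‖²)`.
With iterates `x^k, x^{k−1} ∈ B`, `α1, β1 ∈ [0,1]`,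
`z1^{k−1} = x1^{k−1} + β1(x1^{k−1} − x1^{k−2})`, `(z1^{k−1}, x2^{k−1}) ∈ B`,
`0 < τ1^{k−1} ≤ τ1⁺`, and
`v1^k = ∇_{x1}H(x1^k, x2^k) − ∇_{x1}H(z1^{k−1}, x2^{k−1})
  + τ1^{k−1}(x1^{k−1} − x1^k + α1(x1^{k−1} − x1^{k−2}))`,
one has `‖v1^k‖ ≤ (τ1⁺ + M)(‖x^k − x^{k−1}‖ + ‖x^{k−1} − x^{k−2}‖)`. -/
theorem stmt_11 {n1 n2 : ℕ}
    (H : EuclideanSpace ℝ (Fin n1) → EuclideanSpace ℝ (Fin n2) → ℝ)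
    (hH1 : ∀ x2, Differentiable ℝ (fun x1 => H x1 x2))
    (hH2 : ∀ x1, Differentiable ℝ (fun x2 => H x1 x2))
    (B : Set (EuclideanSpace ℝ (Fin n1) × EuclideanSpace ℝ (Fin n2)))
    (M : ℝ) (hM0 : 0 ≤ M)
    -- ∇H is M-Lipschitz on B:  ‖∇H(p) − ∇H(q)‖ ≤ M‖p − q‖ for p, q ∈ B,
    -- where ‖(a, b)‖ = √(‖a‖² + ‖b‖²)
    (hMlip : ∀ p q : EuclideanSpace ℝ (Fin n1) × EuclideanSpace ℝ (Fin n2),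
      p ∈ B → q ∈ B →
      Real.sqrt (‖gradient (fun a => H a p.2) p.1 - gradient (fun a => H a q.2) q.1‖ ^ 2
          + ‖gradient (fun b => H p.1 b) p.2 - gradient (fun b => H q.1 b) q.2‖ ^ 2)
        ≤ M * Real.sqrt (‖p.1 - q.1‖ ^ 2 + ‖p.2 - q.2‖ ^ 2))
    -- iterates x^k, x^{k−1}, x^{k−2}
    (x1k x1km1 x1km2 : EuclideanSpace ℝ (Fin n1))
    (x2k x2km1 x2km2 : EuclideanSpace ℝ (Fin n2))
    (hxkB : (x1k, x2k) ∈ B) (hxkm1B : (x1km1, x2km1) ∈ B)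
    (α1 β1 : ℝ) (hα1 : α1 ∈ Set.Icc (0 : ℝ) 1) (hβ1 : β1 ∈ Set.Icc (0 : ℝ) 1)
    (z1km1 : EuclideanSpace ℝ (Fin n1))
    (hz1 : z1km1 = x1km1 + β1 • (x1km1 - x1km2))
    (hzB : (z1km1, x2km1) ∈ B)
    (τ1km1 τ1plus : ℝ) (hτpos : 0 < τ1km1) (hττ : τ1km1 ≤ τ1plus)
    (v1k : EuclideanSpace ℝ (Fin n1))
    (hv1 : v1k = gradient (fun a => H a x2k) x1k - gradient (fun a => H a x2km1) z1km1
      + τ1km1 • (x1km1 - x1k + α1 • (x1km1 - x1km2))) :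
    ‖v1k‖ ≤ (τ1plus + M) * (Real.sqrt (‖x1k - x1km1‖ ^ 2 + ‖x2k - x2km1‖ ^ 2)
      + Real.sqrt (‖x1km1 - x1km2‖ ^ 2 + ‖x2km1 - x2km2‖ ^ 2)) := by

  obtain ⟨hα0, hα11⟩ := hα1
  obtain ⟨hβ0, hβ11⟩ := hβ1
  set g1 := gradient (fun a => H a x2k) x1k
  set g2 := gradient (fun a => H a x2km1) z1km1
  set sA := Real.sqrt (‖x1k - x1km1‖ ^ 2 + ‖x2k - x2km1‖ ^ 2) with hsA
  set sB := Real.sqrt (‖x1km1 - x1km2‖ ^ 2 + ‖x2km1 - x2km2‖ ^ 2) with hsB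
  have hsA0 : 0 ≤ sA := Real.sqrt_nonneg _
  have hsB0 : 0 ≤ sB := Real.sqrt_nonneg _
  have hτp : 0 < τ1plus := lt_of_lt_of_le hτpos hττ
  -- norms ≤ sA, sB
  have h1A : ‖x1k - x1km1‖ ≤ sA := aux_le_sqrt _ _ (norm_nonneg _)
  have h1B : ‖x1km1 - x1km2‖ ≤ sB := aux_le_sqrt _ _ (norm_nonneg _)
  -- gradient term bound
  have hgrad : ‖g1 - g2‖ ≤ M * (sA + sB) := by
    have hlip := hMlip (x1k, x2k) (z1km1, x2km1) hxkB hzB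
    simp only at hlip
    have hle1 : ‖g1 - g2‖ ≤ Real.sqrt (‖g1 - g2‖ ^ 2 +
        ‖gradient (fun b => H x1k b) x2k - gradient (fun b => H z1km1 b) x2km1‖ ^ 2) :=
      aux_le_sqrt _ _ (norm_nonneg _)
    have hz' : ‖x1k - z1km1‖ ≤ ‖x1k - x1km1‖ + ‖x1km1 - x1km2‖ := by
      rw [hz1]
      calc ‖x1k - (x1km1 + β1 • (x1km1 - x1km2))‖
          = ‖(x1k - x1km1) - β1 • (x1km1 - x1km2)‖ := by congr 1; abel
        _ ≤ ‖x1k - x1km1‖ + ‖β1 • (x1km1 - x1km2)‖ := norm_sub_le _ _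
        _ = ‖x1k - x1km1‖ + β1 * ‖x1km1 - x1km2‖ := by
            rw [norm_smul, Real.norm_eq_abs, abs_of_nonneg hβ0]
        _ ≤ ‖x1k - x1km1‖ + ‖x1km1 - x1km2‖ :=
            add_le_add le_rfl (mul_le_of_le_one_left (norm_nonneg _) hβ11)
    have hmono : Real.sqrt (‖x1k - z1km1‖ ^ 2 + ‖x2k - x2km1‖ ^ 2) ≤ sA + sB := by
      calc Real.sqrt (‖x1k - z1km1‖ ^ 2 + ‖x2k - x2km1‖ ^ 2)
          ≤ Real.sqrt ((‖x1k - x1km1‖ + ‖x1km1 - x1km2‖) ^ 2 + ‖x2k - x2km1‖ ^ 2) := by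
            apply Real.sqrt_le_sqrt
            gcongr
        _ ≤ sA + ‖x1km1 - x1km2‖ :=
            aux_sqrt_shift _ _ _ (norm_nonneg _) (norm_nonneg _)
        _ ≤ sA + sB := by linarith
    calc ‖g1 - g2‖ ≤ M * Real.sqrt (‖x1k - z1km1‖ ^ 2 + ‖x2k - x2km1‖ ^ 2) :=
          le_trans hle1 hlip
      _ ≤ M * (sA + sB) := mul_le_mul_of_nonneg_left hmono hM0
  -- τ term bound
  have hτterm : ‖τ1km1 • (x1km1 - x1k + α1 • (x1km1 - x1km2))‖ ≤ τ1plus * (sA + sB) := by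
    rw [norm_smul, Real.norm_eq_abs, abs_of_pos hτpos]
    have h1 : ‖x1km1 - x1k + α1 • (x1km1 - x1km2)‖ ≤ sA + sB := by
      calc ‖x1km1 - x1k + α1 • (x1km1 - x1km2)‖
          ≤ ‖x1km1 - x1k‖ + ‖α1 • (x1km1 - x1km2)‖ := norm_add_le _ _
        _ = ‖x1km1 - x1k‖ + α1 * ‖x1km1 - x1km2‖ := by
            rw [norm_smul, Real.norm_eq_abs, abs_of_nonneg hα0]
        _ ≤ sA + sB := by
            rw [norm_sub_rev]
            exact add_le_add h1A
              (le_trans (mul_le_of_le_one_left (norm_nonneg _) hα11) h1B)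
    exact mul_le_mul hττ h1 (norm_nonneg _) (le_of_lt hτp)
  calc ‖v1k‖ ≤ ‖g1 - g2‖ + ‖τ1km1 • (x1km1 - x1k + α1 • (x1km1 - x1km2))‖ := by
        rw [hv1]; exact norm_add_le _ _
    _ ≤ M * (sA + sB) + τ1plus * (sA + sB) := add_le_add hgrad hτterm
    _ = (τ1plus + M) * (sA + sB) := by ring
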